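/- A column λ ∈ [n] of X ∈ ℕ^{m×n} (with m ≥ 1) is eliminable if and only if there exists a matched path in the induced labeled layered grid graph (G_X, σ_X) starting at the vertex (0,0) whose matching map f takes the value λ on some step. -/

import Mathlib

/-- Column `k` of matrix `X` (with `m` rows, 1-indexed) is increasing in the interval
`[i,j] ⊆ [m]`. -/
def ColIncr (m : ℕ) (X : ℕ → ℕ → ℕ) (k i j : ℕ) : Prop :=
  1 ≤ i ∧ i ≤ j ∧ j ≤ m ∧ (∀ a, i ≤ a → a < j → X a k ≤ X (a + 1) k) ∧ X i k < X j k

/-- Column `k` is decreasing in the interval `[i,j] ⊆ [m]`. -/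
def ColDecr (m : ℕ) (X : ℕ → ℕ → ℕ) (k i j : ℕ) : Prop :=
  1 ≤ i ∧ i ≤ j ∧ j ≤ m ∧ (∀ a, i ≤ a → a < j → X (a + 1) k ≤ X a k) ∧ X j k < X i k

/-- Number of `0`s (i.e. `false`) among `r₁,…,r_{i-1}`. -/
def zerosBefore {kk : ℕ} (r : Fin kk → Bool) (i : Fin kk) : ℕ :=
  (Finset.univ.filter fun t : Fin kk => t < i ∧ r t = false).card

/-- Number of `1`s (i.e. `true`) among `r₁,…,r_{i-1}`. -/
def onesBefore {kk : ℕ} (r : Fin kk → Bool) (i : Fin kk) : ℕ :=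
  (Finset.univ.filter fun t : Fin kk => t < i ∧ r t = true).card

/-- `(c, r)` is an elimination sequence (of length `kk`) for the matrix `X ∈ ℕ^{m×n}`:
`c` has pairwise distinct entries in `[n]`, and at each step `i`, if `r i = 0` then
column `c i` is increasing in `[zᵢ+1, m-oᵢ]`, and if `r i = 1` then column `c i`
is decreasing in `[zᵢ+1, m-oᵢ]`. -/
def IsElimSeq (m n : ℕ) (X : ℕ → ℕ → ℕ) {kk : ℕ} (c : Fin kk → ℕ) (r : Fin kk → Bool) : Prop :=
  (∀ i, c i ∈ Finset.Icc 1 n) ∧ Function.Injective c ∧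
  ∀ i : Fin kk,
    (r i = false → ColIncr m X (c i) (zerosBefore r i + 1) (m - onesBefore r i)) ∧
    (r i = true → ColDecr m X (c i) (zerosBefore r i + 1) (m - onesBefore r i))


/-- `(u,v)` is a south edge: `v = (u₁+1, u₂)`. -/
def IsSouth (u v : ℕ × ℕ) : Prop := v = (u.1 + 1, u.2)

/-- `(u,v)` is an east edge: `v = (u₁, u₂+1)`. -/
def IsEast (u v : ℕ × ℕ) : Prop := v = (u.1, u.2 + 1)

/-- Edge relation of the complete `M × N` layered grid graph on `{0,…,M} × {0,…,N}`. -/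
def GridEdge (M N : ℕ) (u v : ℕ × ℕ) : Prop :=
  (u.1 < M ∧ u.2 ≤ N ∧ IsSouth u v) ∨ (u.1 ≤ M ∧ u.2 < N ∧ IsEast u v)

/-- The labeling function `σ_X` induced by `X ∈ ℕ^{m×n}` on the complete
`(m-1) × (m-1)` layered grid graph: a south edge `((i,j),(i+1,j))` is labeled with the
columns of `X` increasing in `[i+1, m-j]`, and an east edge `((i,j),(i,j+1))` with the
columns decreasing in `[i+1, m-j]`. -/
def sigmaX (m n : ℕ) (X : ℕ → ℕ → ℕ) (u v : ℕ × ℕ) : Set ℕ :=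
  {lam | lam ∈ Finset.Icc 1 n ∧
    ((IsSouth u v ∧ ColIncr m X lam (u.1 + 1) (m - u.2)) ∨
     (IsEast u v ∧ ColDecr m X lam (u.1 + 1) (m - u.2)))}

/-- There is a matched path of length `k` in the labeled complete `M × N` layered grid
graph `(G, σ)` starting at `v₀`: a path `v₀, v₁, …, v_k` along edges, together with an
injective assignment of a label to each step, each chosen from that edge's label set. -/
def MatchedPathFrom (M N : ℕ) (σ : ℕ × ℕ → ℕ × ℕ → Set ℕ) (v₀ : ℕ × ℕ) (k : ℕ) : Prop :=
  ∃ (v : Fin (k + 1) → ℕ × ℕ) (f : Fin k → ℕ),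
    v 0 = v₀ ∧
    (∀ t : Fin k, GridEdge M N (v t.castSucc) (v t.succ)) ∧
    Function.Injective f ∧
    (∀ t : Fin k, f t ∈ σ (v t.castSucc) (v t.succ))

/-- Column `lam` is eliminable: it occurs in some elimination sequence for `X`. -/
def Eliminable (m n : ℕ) (X : ℕ → ℕ → ℕ) (lam : ℕ) : Prop :=
  ∃ (kk : ℕ) (c : Fin kk → ℕ) (r : Fin kk → Bool),
    IsElimSeq m n X c r ∧ ∃ i, c i = lam

/-- Count of `t : Fin k` with `t.val < j` satisfying `p`. -/
def cntLt {k : ℕ} (p : Fin k → Prop) [DecidablePred p] (j : ℕ) : ℕ :=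
  (Finset.univ.filter fun t : Fin k => t.val < j ∧ p t).card

lemma cntLt_zero {k : ℕ} (p : Fin k → Prop) [DecidablePred p] : cntLt p 0 = 0 := by
  simp [cntLt]

lemma cntLt_succ {k : ℕ} (p : Fin k → Prop) [DecidablePred p] {j : ℕ} (hj : j < k) :
    cntLt p (j + 1) = cntLt p j + if p ⟨j, hj⟩ then 1 else 0 := by
  classical
  have hsplit : (Finset.univ.filter fun t : Fin k => t.val < j + 1 ∧ p t)
      = (Finset.univ.filter fun t : Fin k => t.val < j ∧ p t)
        ∪ (Finset.univ.filter fun t : Fin k => t = ⟨j, hj⟩ ∧ p t) := by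
    ext t
    simp only [Finset.mem_union, Finset.mem_filter, Finset.mem_univ, true_and]
    constructor
    · rintro ⟨hlt, hp⟩
      rcases Nat.lt_succ_iff_lt_or_eq.1 hlt with h | h
      · exact Or.inl ⟨h, hp⟩
      · exact Or.inr ⟨Fin.ext h, hp⟩
    · rintro (⟨h, hp⟩ | ⟨h, hp⟩)
      · exact ⟨Nat.lt_succ_of_lt h, hp⟩
      · exact ⟨by rw [h]; exact Nat.lt_succ_self j, hp⟩
  have hdisj : Disjoint (Finset.univ.filter fun t : Fin k => t.val < j ∧ p t)
      (Finset.univ.filter fun t : Fin k => t = ⟨j, hj⟩ ∧ p t) := by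
    rw [Finset.disjoint_left]
    rintro t ht1 ht2
    simp only [Finset.mem_filter, Finset.mem_univ, true_and] at ht1 ht2
    rw [ht2.1] at ht1
    exact absurd ht1.1 (lt_irrefl j)
  rw [cntLt, hsplit, Finset.card_union_of_disjoint hdisj]
  congr 1
  by_cases hp : p ⟨j, hj⟩
  · have h1 : (Finset.univ.filter fun t : Fin k => t = ⟨j, hj⟩ ∧ p t) = {⟨j, hj⟩} := by
      ext t
      simp only [Finset.mem_filter, Finset.mem_univ, true_and, Finset.mem_singleton]
      constructor
      · exact fun h => h.1
      · rintro rfl; exact ⟨rfl, hp⟩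
    rw [h1]; simp [hp]
  · have h1 : (Finset.univ.filter fun t : Fin k => t = ⟨j, hj⟩ ∧ p t) = ∅ := by
      ext t
      simp only [Finset.mem_filter, Finset.mem_univ, true_and, Finset.notMem_empty,
        iff_false]
      rintro ⟨rfl, h⟩; exact hp h
    rw [h1]; simp [hp]

lemma zerosBefore_eq {k : ℕ} (r : Fin k → Bool) (i : Fin k) :
    zerosBefore r i = cntLt (fun t => r t = false) i.val := by
  unfold zerosBefore cntLt
  congr 1

lemma onesBefore_eq {k : ℕ} (r : Fin k → Bool) (i : Fin k) :
    onesBefore r i = cntLt (fun t => r t = true) i.val := by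
  unfold onesBefore cntLt
  congr 1

/-- A column `lam` of `X ∈ ℕ^{m×n}` (with `m ≥ 1`) is eliminable iff some matched path in
the induced labeled layered grid graph `(G_X, σ_X)` starting at `(0,0)` uses label `lam`
on some step. -/
theorem eliminable_iff_matchedPath_uses_label
    (m n : ℕ) (hm : 1 ≤ m) (X : ℕ → ℕ → ℕ) (lam : ℕ) :
    Eliminable m n X lam ↔
      ∃ (k : ℕ) (v : Fin (k + 1) → ℕ × ℕ) (f : Fin k → ℕ),
        v 0 = (0, 0) ∧
        (∀ t : Fin k, GridEdge (m - 1) (m - 1) (v t.castSucc) (v t.succ)) ∧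
        Function.Injective f ∧
        (∀ t : Fin k, f t ∈ sigmaX m n X (v t.castSucc) (v t.succ)) ∧
        (∃ t : Fin k, f t = lam) := by
  classical
  constructor
  · rintro ⟨k, c, r, ⟨hc, hinj, hspec⟩, i, hci⟩
    refine ⟨k, fun j : Fin (k + 1) =>
        (cntLt (fun t => r t = false) j.val, cntLt (fun t => r t = true) j.val),
      c, ?_, ?_, hinj, ?_, ⟨i, hci⟩⟩
    · simp [cntLt_zero]
    · intro t
      have hz : zerosBefore r t = cntLt (fun t' => r t' = false) t.val := zerosBefore_eq r t
      have ho : onesBefore r t = cntLt (fun t' => r t' = true) t.val := onesBefore_eq r t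
      cases hr : r t with
      | false =>
        have hcol := (hspec t).1 hr
        rw [hz, ho] at hcol
        set z := cntLt (fun t' => r t' = false) t.val with hzdef
        set o := cntLt (fun t' => r t' = true) t.val with hodef
        obtain ⟨h1, h2, h3, h4, h5⟩ := hcol
        have hlt : z + 1 < m - o := lt_of_le_of_ne h2 (by
          intro e; rw [e] at h5; exact lt_irrefl _ h5)
        left
        refine ⟨show z < m - 1 by omega, show o ≤ m - 1 by omega, ?_⟩
        show (cntLt (fun t' => r t' = false) (t.val + 1),
              cntLt (fun t' => r t' = true) (t.val + 1)) = (z + 1, o)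
        rw [cntLt_succ (p := fun t' => r t' = false) t.isLt,
            cntLt_succ (p := fun t' => r t' = true) t.isLt]
        have het : (⟨t.val, t.isLt⟩ : Fin k) = t := rfl
        rw [het]
        simp [hr]
        exact ⟨rfl, rfl⟩
      | true =>
        have hcol := (hspec t).2 hr
        rw [hz, ho] at hcol
        set z := cntLt (fun t' => r t' = false) t.val with hzdef
        set o := cntLt (fun t' => r t' = true) t.val with hodef
        obtain ⟨h1, h2, h3, h4, h5⟩ := hcol
        have hlt : z + 1 < m - o := lt_of_le_of_ne h2 (by
          intro e; rw [e] at h5; exact lt_irrefl _ h5)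
        right
        refine ⟨show z ≤ m - 1 by omega, show o < m - 1 by omega, ?_⟩
        show (cntLt (fun t' => r t' = false) (t.val + 1),
              cntLt (fun t' => r t' = true) (t.val + 1)) = (z, o + 1)
        rw [cntLt_succ (p := fun t' => r t' = false) t.isLt,
            cntLt_succ (p := fun t' => r t' = true) t.isLt]
        have het : (⟨t.val, t.isLt⟩ : Fin k) = t := rfl
        rw [het]
        simp [hr]
        exact ⟨rfl, rfl⟩
    · intro t
      have hz : zerosBefore r t = cntLt (fun t' => r t' = false) t.val := zerosBefore_eq r t
      have ho : onesBefore r t = cntLt (fun t' => r t' = true) t.val := onesBefore_eq r t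
      refine ⟨hc t, ?_⟩
      cases hr : r t with
      | false =>
        have hcol := (hspec t).1 hr
        rw [hz, ho] at hcol
        left
        constructor
        · show (cntLt (fun t' => r t' = false) (t.val + 1),
                cntLt (fun t' => r t' = true) (t.val + 1)) = _
          rw [cntLt_succ (p := fun t' => r t' = false) t.isLt,
              cntLt_succ (p := fun t' => r t' = true) t.isLt]
          have het : (⟨t.val, t.isLt⟩ : Fin k) = t := rfl
          rw [het]
          simp [hr]
        · exact hcol
      | true =>
        have hcol := (hspec t).2 hr
        rw [hz, ho] at hcol
        right
        constructor
        · show (cntLt (fun t' => r t' = false) (t.val + 1),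
                cntLt (fun t' => r t' = true) (t.val + 1)) = _
          rw [cntLt_succ (p := fun t' => r t' = false) t.isLt,
              cntLt_succ (p := fun t' => r t' = true) t.isLt]
          have het : (⟨t.val, t.isLt⟩ : Fin k) = t := rfl
          rw [het]
          simp [hr]
        · exact hcol
  · rintro ⟨k, v, f, hv0, hedge, hinj, hlab, t0, ht0⟩
    set r : Fin k → Bool := fun t => decide ((v t.succ).2 = (v t.castSucc).2 + 1) with hrdef
    have hinv : ∀ j (hj : j ≤ k),
        v ⟨j, Nat.lt_succ_of_le hj⟩ =
          (cntLt (fun t => r t = false) j, cntLt (fun t => r t = true) j) := by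
      intro j
      induction j with
      | zero =>
        intro _
        rw [cntLt_zero, cntLt_zero]
        exact hv0
      | succ j ih =>
        intro hj
        have hjk : j < k := hj
        set t : Fin k := ⟨j, hjk⟩ with htdef
        have hcs : t.castSucc = (⟨j, Nat.lt_succ_of_le (le_of_lt hjk)⟩ : Fin (k + 1)) := rfl
        have hss : t.succ = (⟨j + 1, Nat.lt_succ_of_le hj⟩ : Fin (k + 1)) := rfl
        have hu : v t.castSucc =
            (cntLt (fun t' => r t' = false) j, cntLt (fun t' => r t' = true) j) := by
          rw [hcs]; exact ih (le_of_lt hjk)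
        rcases hedge t with ⟨_, _, hs⟩ | ⟨_, _, he⟩
        · have hrt : r t = false := by
            have hs2 : v t.succ = ((v t.castSucc).1 + 1, (v t.castSucc).2) := hs
            simp [hrdef, hs2]
          rw [← hss, hs, hu]
          rw [cntLt_succ (p := fun t' => r t' = false) hjk,
              cntLt_succ (p := fun t' => r t' = true) hjk]
          rw [show (⟨j, hjk⟩ : Fin k) = t from rfl]
          simp [hrt]
        · have hrt : r t = true := by
            have he2 : v t.succ = ((v t.castSucc).1, (v t.castSucc).2 + 1) := he
            simp [hrdef, he2]
          rw [← hss, he, hu]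
          rw [cntLt_succ (p := fun t' => r t' = false) hjk,
              cntLt_succ (p := fun t' => r t' = true) hjk]
          rw [show (⟨j, hjk⟩ : Fin k) = t from rfl]
          simp [hrt]
    have hu : ∀ i : Fin k, v i.castSucc = (zerosBefore r i, onesBefore r i) := by
      intro i
      rw [zerosBefore_eq, onesBefore_eq]
      exact hinv i.val (le_of_lt i.isLt)
    refine ⟨k, f, r, ⟨fun i => (hlab i).1, hinj, ?_⟩, t0, ht0⟩
    intro i
    obtain ⟨hmem, hdisj⟩ := hlab i
    rcases hdisj with ⟨hs, hcol⟩ | ⟨he, hcol⟩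
    · have hri : r i = false := by
        have hs2 : v i.succ = ((v i.castSucc).1 + 1, (v i.castSucc).2) := hs
        simp [hrdef, hs2]
      rw [hu i] at hcol
      constructor
      · intro _; exact hcol
      · intro h; rw [hri] at h; cases h
    · have hri : r i = true := by
        have he2 : v i.succ = ((v i.castSucc).1, (v i.castSucc).2 + 1) := he
        simp [hrdef, he2]
      rw [hu i] at hcol
      constructor
      · intro h; rw [hri] at h; cases h
      · intro _; exact hcol
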